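/- The Lugo limit satisfies lim_{n→∞} [ Σ_{i=1}^n Σ_{j=1}^n 1/(i+j) − 2·(log 2)·n + log n ] = 3/2 − log(2π) − 16·Σ_{n=1}^∞ n·a_{2n}/4^n (this value equals −1/2 − γ + log 2). -/

import Mathlib

open Filter Topology

/-- The Riemann xi function: `ξ(s) = (1/2)·s·(s−1)·π^{−s/2}·Γ(s/2)·ζ(s)`. -/
noncomputable def riemannXi (s : ℂ) : ℂ := (1 / 2) * s * (s - 1) * completedRiemannZeta s

/-- The `2n`-th Taylor coefficient of `ξ` at `s = 1/2`, a real number. -/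
noncomputable def a (n : ℕ) : ℝ :=
  (iteratedDeriv (2 * n) riemannXi (1 / 2)).re / (2 * n).factorial

namespace LugoAux


noncomputable def g (s : ℂ) : ℂ := 1 / 2 * s * (s - 1) * completedRiemannZeta₀ s + 1 / 2

lemma hg : Differentiable ℂ g := by
  unfold g
  exact ((((differentiable_const _).mul differentiable_id).mul
    (differentiable_id.sub_const 1)).mul differentiable_completedZeta₀).add_const _

lemma g_one_sub (s : ℂ) : g (1 - s) = g s := by
  unfold g; rw [completedRiemannZeta₀_one_sub]; ring

lemma xi_eventuallyEq : (riemannXi : ℂ → ℂ) =ᶠ[nhds (1/2 : ℂ)] g := by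
  have hopen : IsOpen {s : ℂ | s ≠ 0 ∧ s ≠ 1} := by
    refine IsOpen.inter ?_ ?_ <;> exact isOpen_compl_singleton
  have hmem : (1/2 : ℂ) ∈ {s : ℂ | s ≠ 0 ∧ s ≠ 1} := by norm_num
  filter_upwards [hopen.mem_nhds hmem] with s hs
  obtain ⟨h0, h1⟩ := hs
  have h1' : (1:ℂ) - s ≠ 0 := sub_ne_zero.mpr (Ne.symm h1)
  unfold riemannXi g
  rw [completedRiemannZeta_eq]
  field_simp
  ring

lemma iter_eq (k : ℕ) : iteratedDeriv k riemannXi (1/2) = iteratedDeriv k g (1/2) :=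
  xi_eventuallyEq.iteratedDeriv_eq k

lemma odd_deriv_zero {k : ℕ} (hk : Odd k) : iteratedDeriv k g (1/2 : ℂ) = 0 := by
  have e1 := iteratedDeriv_comp_neg k (fun y : ℂ => g (1 + y)) (1/2 : ℂ)
  have e2 : iteratedDeriv k (fun y : ℂ => g (1 + y)) (-(1/2))
      = iteratedDeriv k g (1 + -(1/2)) := by
    rw [iteratedDeriv_comp_const_add]
  have e3 : (fun x : ℂ => g (1 + -x)) = g := funext fun x => by
    rw [← sub_eq_add_neg, g_one_sub]
  have e4 : (1 : ℂ) + -(1/2) = 1/2 := by norm_num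
  rw [e3, e2, e4, hk.neg_one_pow] at e1
  have : (2 : ℂ) • iteratedDeriv k g (1/2 : ℂ) = 0 := by
    rw [two_smul]
    nth_rewrite 1 [e1]
    simp
  simpa using this

lemma deriv_g_one : deriv g 1 = completedRiemannZeta₀ 1 / 2 := by
  have hΛ : HasDerivAt completedRiemannZeta₀ (deriv completedRiemannZeta₀ 1) 1 :=
    (differentiable_completedZeta₀ 1).hasDerivAt
  have hP : HasDerivAt (fun s : ℂ => 1/2 * s * (s - 1)) (1/2) 1 := by
    have h : HasDerivAt (fun s : ℂ => 1/2 * s * (s - 1)) _ 1 := (((hasDerivAt_id (1:ℂ)).const_mul (1/2 : ℂ)).mul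
      ((hasDerivAt_id (1:ℂ)).sub_const 1))
    convert h using 1
    norm_num
  have hgd : HasDerivAt g (completedRiemannZeta₀ 1 / 2) 1 := by
    have h : HasDerivAt g _ 1 := (hP.mul hΛ).add_const (1/2 : ℂ)
    convert h using 1
    ring
  exact hgd.deriv

lemma hg' : Differentiable ℂ (deriv g) := fun z =>
  ((Complex.analyticOnNhd_univ_iff_differentiable.mpr hg).deriv z (Set.mem_univ z)).differentiableAt

noncomputable def w (m : ℕ) : ℂ :=
  ((4 * m / ((2*m).factorial * 4^m) : ℝ) : ℂ) * iteratedDeriv (2*m) g (1/2)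

lemma hasSum_w : HasSum w (completedRiemannZeta₀ 1 / 2) := by
  have H := Complex.hasSum_taylorSeries_of_entire hg' (1/2) 1
  rw [show deriv g 1 = completedRiemannZeta₀ 1 / 2 from deriv_g_one] at H
  set t : ℕ → ℂ := fun k =>
    (k.factorial : ℂ)⁻¹ • ((1:ℂ) - 1/2)^k • iteratedDeriv k (deriv g) (1/2) with ht
  have hinj : Function.Injective (fun n : ℕ => 2*n+1) := by
    intro x y h
    dsimp at h
    omega
  have hzero : ∀ x ∉ Set.range (fun n : ℕ => 2*n+1), t x = 0 := by
    intro x hx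
    have hodd : Odd (x + 1) := by
      rcases Nat.even_or_odd x with he | ho
      · exact he.add_one
      · obtain ⟨m, hm⟩ := ho
        exact absurd ⟨m, by dsimp; omega⟩ hx
    have hz : iteratedDeriv x (deriv g) (1/2 : ℂ) = 0 := by
      rw [← iteratedDeriv_succ']
      exact odd_deriv_zero hodd
    simp only [ht, hz, smul_zero]
  have H2 : HasSum (fun n : ℕ => t (2*n+1)) (completedRiemannZeta₀ 1 / 2) :=
    (Function.Injective.hasSum_iff hinj hzero).mpr H
  have key : (fun n : ℕ => t (2*n+1)) = fun n : ℕ => w (n+1) := by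
    funext n
    show (((2*n+1).factorial : ℂ))⁻¹ • ((1:ℂ) - 1/2)^(2*n+1) •
        iteratedDeriv (2*n+1) (deriv g) (1/2) = w (n+1)
    rw [← iteratedDeriv_succ']
    unfold w
    rw [show 2*(n+1) = 2*n+1+1 by ring]
    rw [smul_eq_mul, smul_eq_mul, ← mul_assoc]
    congr 1
    have hcoef : (4 * (((n:ℕ)+1 : ℕ):ℝ) / (((2*n+1+1).factorial : ℝ) * 4^(n+1)) : ℝ)
        = ((2*n+1).factorial : ℝ)⁻¹ * (2⁻¹)^(2*n+1) := by
      have h1 : ((2*n+1+1).factorial : ℝ) = (2*(n:ℝ)+2) * ((2*n+1).factorial : ℝ) := by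
        rw [Nat.factorial_succ]; push_cast; ring
      have h2 : ((2:ℝ)⁻¹)^(2*n+1) = 1/(2*4^n) := by
        rw [pow_succ, pow_mul, show ((2:ℝ)⁻¹)^2 = 4⁻¹ by norm_num, inv_pow]
        ring
      rw [h1, h2]
      have hfr : (((2*n+1).factorial : ℝ)) ≠ 0 := Nat.cast_ne_zero.mpr (Nat.factorial_ne_zero _)
      have h4 : (4:ℝ)^n ≠ 0 := by positivity
      have hn2 : (2*(n:ℝ)+2) ≠ 0 := by positivity
      push_cast
      field_simp
      ring
    rw [show ((1:ℂ) - 1/2) = (((2⁻¹:ℝ)):ℂ) by norm_num]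
    rw [hcoef]
    push_cast
    ring
  rw [key] at H2
  have H3 := (hasSum_nat_add_iff (f := w) 1).mp H2
  have hw0 : w 0 = 0 := by
    unfold w
    norm_num
  simpa [hw0] using H3

lemma hasSum_a : HasSum (fun m : ℕ => (m : ℝ) * a m / 4 ^ m)
    ((completedRiemannZeta₀ 1).re / 8) := by
  have hre := (Complex.hasSum_re hasSum_w).div_const 4
  have hfun : ∀ m : ℕ, (w m).re / 4 = (m:ℝ) * a m / 4 ^ m := by
    intro m
    unfold w
    rw [Complex.re_ofReal_mul]
    unfold a
    rw [iter_eq]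
    have hfr : (((2*m).factorial : ℝ)) ≠ 0 := Nat.cast_ne_zero.mpr (Nat.factorial_ne_zero _)
    have h4 : (4:ℝ)^m ≠ 0 := by positivity
    field_simp
  have hval : (completedRiemannZeta₀ 1 / 2).re / 4 = (completedRiemannZeta₀ 1).re / 8 := by
    rw [show (2:ℂ) = ((2:ℝ):ℂ) by norm_num, Complex.div_ofReal_re]
    ring
  simp only [hfun, hval] at hre
  exact hre

lemma re_zeta0_one : (completedRiemannZeta₀ 1).re
    = (Real.eulerMascheroniConstant - Real.log (4 * Real.pi)) / 2 + 1 := by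
  rw [completedRiemannZeta₀_one]
  have h1 : (4 * (Real.pi : ℂ)) = ((4 * Real.pi : ℝ) : ℂ) := by push_cast; ring
  rw [h1, ← Complex.ofReal_log (by positivity)]
  have : ((Real.eulerMascheroniConstant : ℂ) - ((Real.log (4*Real.pi) : ℝ):ℂ))/2 + 1
      = (((Real.eulerMascheroniConstant - Real.log (4*Real.pi))/2 + 1 : ℝ) : ℂ) := by
    push_cast; ring
  rw [this, Complex.ofReal_re]

lemma tsum_value : (∑' n : ℕ, (n : ℝ) * a n / 4 ^ n)
    = ((Real.eulerMascheroniConstant - Real.log (4 * Real.pi)) / 2 + 1) / 8 := by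
  rw [hasSum_a.tsum_eq, re_zeta0_one]



noncomputable def Hr (n : ℕ) : ℝ := ∑ i ∈ Finset.range n, 1/((i:ℝ)+1)

lemma Hr_succ (n : ℕ) : Hr (n+1) = Hr n + 1/((n:ℝ)+1) := Finset.sum_range_succ _ n

lemma harmonic_cast (n : ℕ) : ((harmonic n : ℚ) : ℝ) = Hr n := by
  unfold Hr harmonic
  push_cast
  simp [one_div]

lemma Hr_tendsto : Tendsto (fun n : ℕ => Hr n - Real.log n) atTop
    (𝓝 Real.eulerMascheroniConstant) := by
  have h := Real.tendsto_harmonic_sub_log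
  simpa only [harmonic_cast] using h

lemma sum_Icc_shift (a b : ℕ) :
    ∑ i ∈ Finset.Icc 1 b, (1:ℝ)/((i:ℝ)+(a:ℝ)) = Hr (a+b) - Hr a := by
  induction b with
  | zero => simp
  | succ b ih =>
    rw [Finset.sum_Icc_succ_top (by omega : 1 ≤ b + 1), ih,
      show a + (b+1) = (a+b)+1 by ring, Hr_succ]
    push_cast
    ring

lemma sum_Icc_shift' (a b : ℕ) :
    ∑ j ∈ Finset.Icc 1 b, (1:ℝ)/((a:ℝ)+(j:ℝ)) = Hr (a+b) - Hr a := by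
  rw [← sum_Icc_shift a b]
  exact Finset.sum_congr rfl fun i _ => by ring

lemma S_eq (n : ℕ) :
    (∑ i ∈ Finset.Icc 1 n, ∑ j ∈ Finset.Icc 1 n, (1 : ℝ) / (i + j))
      = (2*(n:ℝ)+1) * Hr (2*n) - (2*(n:ℝ)+2) * Hr n := by
  induction n with
  | zero => simp [Hr]
  | succ n ih =>
    have expand : (∑ i ∈ Finset.Icc 1 (n+1), ∑ j ∈ Finset.Icc 1 (n+1), (1 : ℝ) / (i + j))
        = (∑ i ∈ Finset.Icc 1 n, ∑ j ∈ Finset.Icc 1 n, (1 : ℝ) / (i + j))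
          + (∑ i ∈ Finset.Icc 1 n, (1:ℝ)/((i:ℝ)+((n+1:ℕ):ℝ)))
          + ((∑ j ∈ Finset.Icc 1 n, (1:ℝ)/(((n+1:ℕ):ℝ)+(j:ℝ)))
              + (1:ℝ)/(((n+1:ℕ):ℝ)+((n+1:ℕ):ℝ))) := by
      rw [Finset.sum_Icc_succ_top (by omega : 1 ≤ n + 1)]
      have inner : ∀ i ∈ Finset.Icc 1 n,
          (∑ j ∈ Finset.Icc 1 (n+1), (1 : ℝ) / (i + j))
            = (∑ j ∈ Finset.Icc 1 n, (1 : ℝ) / (i + j)) + (1:ℝ)/((i:ℝ)+((n+1:ℕ):ℝ)) := by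
        intro i _
        rw [Finset.sum_Icc_succ_top (by omega : 1 ≤ n + 1)]
      rw [Finset.sum_congr rfl inner, Finset.sum_add_distrib]
      rw [Finset.sum_Icc_succ_top (show 1 ≤ n + 1 by omega)]
    rw [expand, ih, sum_Icc_shift (n+1) n, sum_Icc_shift' (n+1) n]
    rw [show (n+1)+n = 2*n+1 by ring, show 2*(n+1) = (2*n+1)+1 by ring,
      Hr_succ (2*n+1), Hr_succ (2*n), Hr_succ n]
    have h1 : ((n:ℝ)+1) ≠ 0 := by positivity
    have h2 : (2*(n:ℝ)+1) ≠ 0 := by positivity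
    have h3 : (2*(n:ℝ)+2) ≠ 0 := by positivity
    push_cast
    field_simp
    ring

noncomputable def v (j : ℕ) : ℝ := 1/((2*(j:ℝ)+1)*(2*(j:ℝ)+2))

lemma v_nonneg (j : ℕ) : 0 ≤ v j := by unfold v; positivity

lemma v_partial (n : ℕ) : ∑ j ∈ Finset.range n, v j = Hr (2*n) - Hr n := by
  induction n with
  | zero => simp [Hr]
  | succ n ih =>
    rw [Finset.sum_range_succ, ih, show 2*(n+1) = (2*n+1)+1 by ring, Hr_succ,
      show (2*n+1) = (2*n)+1 from rfl, Hr_succ, Hr_succ]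
    unfold v
    have h1 : ((n:ℝ)+1) ≠ 0 := by positivity
    have h2 : (2*(n:ℝ)+1) ≠ 0 := by positivity
    have h3 : (2*(n:ℝ)+2) ≠ 0 := by positivity
    push_cast
    field_simp
    ring

lemma two_mul_tendsto : Tendsto (fun n : ℕ => 2*n) atTop atTop :=
  tendsto_atTop_mono (fun n => by show n ≤ 2*n; omega) tendsto_id

lemma hasSum_v : HasSum v (Real.log 2) := by
  rw [hasSum_iff_tendsto_nat_of_nonneg v_nonneg]
  have hfun : (fun n : ℕ => ∑ j ∈ Finset.range n, v j) = fun n => Hr (2*n) - Hr n :=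
    funext v_partial
  rw [hfun]
  have h2n : Tendsto (fun n : ℕ => Hr (2*n) - Real.log ((2*n:ℕ):ℝ)) atTop
      (𝓝 Real.eulerMascheroniConstant) := by
    have := Hr_tendsto.comp two_mul_tendsto
    simpa only [Function.comp_def] using this
  refine Tendsto.congr' ?_ (by simpa using (h2n.sub Hr_tendsto).add_const (Real.log 2))
  filter_upwards [eventually_ge_atTop 1] with n hn
  have hn0 : ((n:ℝ)) ≠ 0 := Nat.cast_ne_zero.mpr (by omega)
  have hlog : Real.log (2*(n:ℝ)) = Real.log 2 + Real.log n :=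
    Real.log_mul two_ne_zero hn0
  rw [hlog]
  ring


lemma hasSum_telescope {f : ℕ → ℝ} (hmono : ∀ j, f (j+1) ≤ f j)
    (hlim : Tendsto f atTop (𝓝 0)) :
    HasSum (fun j => f j - f (j+1)) (f 0) := by
  rw [hasSum_iff_tendsto_nat_of_nonneg (fun j => sub_nonneg.mpr (hmono j))]
  have hps : (fun n : ℕ => ∑ j ∈ Finset.range n, (f j - f (j+1))) = fun n => f 0 - f n :=
    funext fun n => Finset.sum_range_sub' f n
  rw [hps]
  simpa using tendsto_const_nhds.sub hlim

lemma tail_eq (n : ℕ) : ∑' j : ℕ, v (j+n) = Real.log 2 - (Hr (2*n) - Hr n) := by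
  have hs := hasSum_v.summable
  have h := Summable.sum_add_tsum_nat_add (f := v) n hs
  rw [v_partial, hasSum_v.tsum_eq] at h
  linarith

lemma summable_tail (n : ℕ) : Summable (fun j : ℕ => v (j+n)) :=
  (summable_nat_add_iff n).mpr hasSum_v.summable

lemma tendsto_inv_linear (c : ℝ) (hc : 0 < c) (d : ℝ) :
    Tendsto (fun j : ℕ => 1/(c*(j:ℝ)+d)) atTop (𝓝 0) := by
  apply Tendsto.div_atTop (tendsto_const_nhds)
  apply tendsto_atTop_add_const_right
  exact (tendsto_natCast_atTop_atTop).const_mul_atTop hc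

lemma tail_lb (n : ℕ) : 1/(2*(2*(n:ℝ)+1)) ≤ ∑' j : ℕ, v (j+n) := by
  set f : ℕ → ℝ := fun j => 1/(2*(2*((j:ℝ)+(n:ℝ))+1)) with hf
  have hmono : ∀ j, f (j+1) ≤ f j := by
    intro j
    apply one_div_le_one_div_of_le (by positivity)
    push_cast
    linarith
  have hlim : Tendsto f atTop (𝓝 0) := by
    have he : f = fun j : ℕ => 1/(4*(j:ℝ)+(4*(n:ℝ)+2)) := funext fun j => by
      rw [hf]; ring_nf
    rw [he]; exact tendsto_inv_linear 4 (by norm_num) _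
  have hts := hasSum_telescope hmono hlim
  have hle : ∀ j : ℕ, f j - f (j+1) ≤ v (j+n) := by
    intro j
    have hk : (0:ℝ) ≤ (j:ℝ)+(n:ℝ) := by positivity
    have heq : f j - f (j+1) = 1/((2*((j:ℝ)+(n:ℝ))+1)*(2*((j:ℝ)+(n:ℝ))+3)) := by
      rw [hf]
      push_cast
      rw [div_sub_div _ _ (by positivity) (by positivity)]
      rw [div_eq_div_iff (by positivity) (by positivity)]
      ring
    have hv : v (j+n) = 1/((2*((j:ℝ)+(n:ℝ))+1)*(2*((j:ℝ)+(n:ℝ))+2)) := by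
      unfold v; push_cast; ring_nf
    rw [heq, hv]
    apply one_div_le_one_div_of_le (by positivity)
    nlinarith
  have hcmp := Summable.tsum_le_tsum hle hts.summable (summable_tail n)
  rw [hts.tsum_eq] at hcmp
  calc 1/(2*(2*(n:ℝ)+1)) = f 0 := by rw [hf]; norm_num
  _ ≤ _ := hcmp

lemma tail_ub {n : ℕ} (hn : 1 ≤ n) : ∑' j : ℕ, v (j+n) ≤ 1/(4*(n:ℝ)) := by
  have hn1 : (1:ℝ) ≤ (n:ℝ) := by exact_mod_cast hn
  set f : ℕ → ℝ := fun j => 1/(4*((j:ℝ)+(n:ℝ))) with hf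
  have hmono : ∀ j, f (j+1) ≤ f j := by
    intro j
    apply one_div_le_one_div_of_le (by positivity)
    push_cast
    linarith
  have hlim : Tendsto f atTop (𝓝 0) := by
    have he : f = fun j : ℕ => 1/(4*(j:ℝ)+(4*(n:ℝ))) := funext fun j => by
      rw [hf]; ring_nf
    rw [he]; exact tendsto_inv_linear 4 (by norm_num) _
  have hts := hasSum_telescope hmono hlim
  have hle : ∀ j : ℕ, v (j+n) ≤ f j - f (j+1) := by
    intro j
    have hk : (1:ℝ) ≤ (j:ℝ)+(n:ℝ) := by
      have : (0:ℝ) ≤ (j:ℝ) := by positivity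
      linarith
    have heq : f j - f (j+1) = 1/((2*((j:ℝ)+(n:ℝ)))*(2*((j:ℝ)+(n:ℝ))+2)) := by
      rw [hf]
      push_cast
      rw [div_sub_div _ _ (by positivity) (by positivity)]
      rw [div_eq_div_iff (by positivity) (by positivity)]
      ring
    have hv : v (j+n) = 1/((2*((j:ℝ)+(n:ℝ))+1)*(2*((j:ℝ)+(n:ℝ))+2)) := by
      unfold v; push_cast; ring_nf
    rw [heq, hv]
    apply one_div_le_one_div_of_le (by positivity)
    nlinarith
  have hcmp := Summable.tsum_le_tsum hle (summable_tail n) hts.summable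
  rw [hts.tsum_eq] at hcmp
  calc ∑' j : ℕ, v (j+n) ≤ f 0 := hcmp
  _ = 1/(4*(n:ℝ)) := by rw [hf]; norm_num

lemma tendsto_weighted_tail :
    Tendsto (fun n : ℕ => (2*(n:ℝ)+1) * (∑' j : ℕ, v (j+n))) atTop (𝓝 (1/2)) := by
  have hub : Tendsto (fun n : ℕ => (2*(n:ℝ)+1) * (1/(4*(n:ℝ)))) atTop (𝓝 (1/2)) := by
    have h1 : Tendsto (fun n : ℕ => 1/2 + (1/4) * (1/(n:ℝ))) atTop (𝓝 (1/2 + (1/4)*0)) :=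
      tendsto_const_nhds.add (tendsto_one_div_atTop_nhds_zero_nat.const_mul _)
    rw [mul_zero, add_zero] at h1
    refine Tendsto.congr' ?_ h1
    filter_upwards [eventually_ge_atTop 1] with n hn
    have hne : ((n:ℝ)) ≠ 0 := Nat.cast_ne_zero.mpr (by omega)
    field_simp
    ring
  refine tendsto_of_tendsto_of_tendsto_of_le_of_le' tendsto_const_nhds hub ?_ ?_
  · filter_upwards with n
    have h := tail_lb n
    have hpos : (0:ℝ) ≤ 2*(n:ℝ)+1 := by positivity
    calc (1:ℝ)/2 = (2*(n:ℝ)+1) * (1/(2*(2*(n:ℝ)+1))) := by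
          field_simp
    _ ≤ _ := mul_le_mul_of_nonneg_left h hpos
  · filter_upwards [eventually_ge_atTop 1] with n hn
    exact mul_le_mul_of_nonneg_left (tail_ub hn) (by positivity)

lemma main_tendsto : Tendsto (fun n : ℕ =>
    (∑ i ∈ Finset.Icc 1 n, ∑ j ∈ Finset.Icc 1 n, (1 : ℝ) / (i + j))
      - 2 * Real.log 2 * n + Real.log n) atTop
    (𝓝 (-(1/2) - Real.eulerMascheroniConstant + Real.log 2)) := by
  have hA : Tendsto (fun n : ℕ =>
      -((2*(n:ℝ)+1) * (∑' j : ℕ, v (j+n))) + (Real.log 2 - (Hr n - Real.log n)))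
      atTop (𝓝 (-(1/2) + (Real.log 2 - Real.eulerMascheroniConstant))) :=
    (tendsto_weighted_tail.neg).add (tendsto_const_nhds.sub Hr_tendsto)
  rw [show -(1/2 : ℝ) + (Real.log 2 - Real.eulerMascheroniConstant)
      = -(1/2) - Real.eulerMascheroniConstant + Real.log 2 by ring] at hA
  refine Tendsto.congr' ?_ hA
  filter_upwards with n
  rw [S_eq n, tail_eq n]
  ring

end LugoAux

theorem lugo_limit_eq :
    Tendsto (fun n : ℕ =>
        (∑ i ∈ Finset.Icc 1 n, ∑ j ∈ Finset.Icc 1 n, (1 : ℝ) / (i + j))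
          - 2 * Real.log 2 * n + Real.log n) atTop
      (nhds (3 / 2 - Real.log (2 * Real.pi) - 16 * ∑' n : ℕ, (n : ℝ) * a n / 4 ^ n)) ∧
    3 / 2 - Real.log (2 * Real.pi) - 16 * (∑' n : ℕ, (n : ℝ) * a n / 4 ^ n) =
      -(1 / 2) - Real.eulerMascheroniConstant + Real.log 2 := by
  have htsum : (∑' n : ℕ, (n : ℝ) * a n / 4 ^ n)
      = ((Real.eulerMascheroniConstant - Real.log (4 * Real.pi)) / 2 + 1) / 8 :=
    LugoAux.tsum_value
  have hlog4 : Real.log (4 * Real.pi) = Real.log 2 + Real.log (2 * Real.pi) := by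
    rw [show (4 * Real.pi) = 2 * (2 * Real.pi) by ring,
      Real.log_mul two_ne_zero (by positivity)]
  have hE : 3 / 2 - Real.log (2 * Real.pi) - 16 * (∑' n : ℕ, (n : ℝ) * a n / 4 ^ n) =
      -(1 / 2) - Real.eulerMascheroniConstant + Real.log 2 := by
    rw [htsum, hlog4]; ring
  refine ⟨?_, hE⟩
  rw [hE]
  exact LugoAux.main_tendsto
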